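/- A variety V has the congruence extension property if and only if for every injective-surjective span ⟨A, B, C, φ_B, φ_C⟩ in V (φ_B an embedding, φ_C surjective), there exist D ∈ V, a homomorphism ψ_B : B → D, and an embedding ψ_C : C → D with ψ_B ∘ φ_B = ψ_C ∘ φ_C. -/

import Mathlib

/-- An algebraic signature: a set of operation symbols with arities. -/
structure Sig : Type 1 where
  ops : Type
  ar : ops → ℕ

/-- An algebra for a signature `S`. -/
structure Alg (S : Sig) : Type 1 where
  carrier : Type
  interp : (f : S.ops) → (Fin (S.ar f) → carrier) → carrier

/-- `φ` is a homomorphism from `A` to `B`. -/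
def IsHom {S : Sig} (A B : Alg S) (φ : A.carrier → B.carrier) : Prop :=
  ∀ (f : S.ops) (v : Fin (S.ar f) → A.carrier),
    φ (A.interp f v) = B.interp f (fun i => φ (v i))

/-- `Θ` is a congruence of `A`: an equivalence relation compatible with all operations. -/
def IsCong {S : Sig} (A : Alg S) (Θ : A.carrier → A.carrier → Prop) : Prop :=
  Equivalence Θ ∧
  ∀ (f : S.ops) (v w : Fin (S.ar f) → A.carrier),
    (∀ i, Θ (v i) (w i)) → Θ (A.interp f v) (A.interp f w)

/-- The direct product of a family of algebras. -/
def prodAlg {S : Sig} (I : Type) (F : I → Alg S) : Alg S :=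
  ⟨∀ i, (F i).carrier, fun f v i => (F i).interp f (fun j => v j i)⟩

/-- A class of algebras is a variety if it is closed under homomorphic images,
subalgebras (up to isomorphism, i.e. under embeddings), and direct products. -/
def IsVariety {S : Sig} (K : Alg S → Prop) : Prop :=
  (∀ (A B : Alg S) (φ : A.carrier → B.carrier),
    K A → IsHom A B φ → Function.Surjective φ → K B) ∧
  (∀ (A B : Alg S) (φ : A.carrier → B.carrier),
    K B → IsHom A B φ → Function.Injective φ → K A) ∧
  (∀ (I : Type) (F : I → Alg S), (∀ i, K (F i)) → K (prodAlg I F))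

/-- A subset of an algebra's carrier is closed under its operations. -/
def ClosedUnderOps {S : Sig} (B : Alg S) (A : Set B.carrier) : Prop :=
  ∀ (f : S.ops) (v : Fin (S.ar f) → B.carrier), (∀ i, v i ∈ A) → B.interp f v ∈ A

/-- The subalgebra of `B` on a closed subset `A`. -/
def subAlg {S : Sig} (B : Alg S) (A : Set B.carrier) (h : ClosedUnderOps B A) : Alg S :=
  ⟨A, fun f v => ⟨B.interp f (fun i => (v i : B.carrier)), h f _ (fun i => (v i).2)⟩⟩

/-- A class of algebras has the congruence extension property if every congruence of a
subalgebra of a member is the restriction of a congruence of that member. -/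
def HasCEP {S : Sig} (K : Alg S → Prop) : Prop :=
  ∀ (B : Alg S), K B → ∀ (A : Set B.carrier) (hA : ClosedUnderOps B A)
    (Θ : ↥A → ↥A → Prop), IsCong (subAlg B A hA) Θ →
    ∃ Φ : B.carrier → B.carrier → Prop, IsCong B Φ ∧
      ∀ x y : ↥A, (Φ (x : B.carrier) (y : B.carrier) ↔ Θ x y)

section Aux

variable {S : Sig}

/-- The setoid associated to a congruence. -/
def congSetoid (A : Alg S) (Θ : A.carrier → A.carrier → Prop) (h : IsCong A Θ) :
    Setoid A.carrier := ⟨Θ, h.1⟩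

/-- The quotient algebra by a congruence. -/
noncomputable def quotAlg (A : Alg S) (Θ : A.carrier → A.carrier → Prop) (h : IsCong A Θ) : Alg S :=
  ⟨Quotient (congSetoid A Θ h),
   fun f v => Quotient.mk (congSetoid A Θ h) (A.interp f (fun i => (v i).out))⟩

lemma out_rel (A : Alg S) (Θ : A.carrier → A.carrier → Prop) (h : IsCong A Θ)
    (a : A.carrier) : Θ ((Quotient.mk (congSetoid A Θ h) a).out) a :=
  Quotient.exact (Quotient.out_eq (Quotient.mk (congSetoid A Θ h) a))

lemma quot_mk_hom (A : Alg S) (Θ : A.carrier → A.carrier → Prop) (h : IsCong A Θ) :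
    IsHom A (quotAlg A Θ h) (Quotient.mk (congSetoid A Θ h)) := by
  intro f v
  apply Quotient.sound
  exact h.2 f _ _ (fun i => h.1.symm (out_rel A Θ h (v i)))

lemma quot_mk_surj (A : Alg S) (Θ : A.carrier → A.carrier → Prop) (h : IsCong A Θ) :
    Function.Surjective (Quotient.mk (congSetoid A Θ h)) :=
  fun q => ⟨q.out, q.out_eq⟩

end Aux

/-- A variety `V` has the congruence extension property iff for every injective-surjective
span `⟨A, B, C, φ_B, φ_C⟩` in `V` (`φ_B` an embedding, `φ_C` surjective), there are
`D ∈ V`, a homomorphism `ψ_B : B → D` and an embedding `ψ_C : C → D` with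
`ψ_B ∘ φ_B = ψ_C ∘ φ_C`. -/
theorem CEP_iff_injective_surjective_spans {S : Sig} (K : Alg S → Prop)
    (hK : IsVariety K) :
    HasCEP K ↔
      ∀ (A B C : Alg S), K A → K B → K C →
        ∀ (φB : A.carrier → B.carrier) (φC : A.carrier → C.carrier),
          IsHom A B φB → Function.Injective φB →
          IsHom A C φC → Function.Surjective φC →
          ∃ D, K D ∧ ∃ (ψB : B.carrier → D.carrier) (ψC : C.carrier → D.carrier),
            IsHom B D ψB ∧ IsHom C D ψC ∧ Function.Injective ψC ∧
            ∀ a, ψB (φB a) = ψC (φC a) := by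
  constructor
  · -- CEP → spans
    intro hCEP A B C hKA hKB hKC φB φC hBhom hBinj hChom hCsurj
    -- the image of φB is a closed subset of B
    have hA' : ClosedUnderOps B (Set.range φB) := by
      intro f v hv
      choose a ha using hv
      refine ⟨A.interp f a, ?_⟩
      rw [hBhom f a]
      exact congrArg _ (funext fun i => ha i)
    -- inverse of φB on its range
    set e : ↥(Set.range φB) → A.carrier := fun x => x.2.choose with hedef
    have he : ∀ x : ↥(Set.range φB), φB (e x) = (x : B.carrier) :=
      fun x => x.2.choose_spec
    have ekey : ∀ (a : A.carrier) (hx : φB a ∈ Set.range φB),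
        e ⟨φB a, hx⟩ = a := fun a hx => hBinj (he ⟨φB a, hx⟩)
    -- the congruence on the image induced by the kernel of φC
    set Θ' : ↥(Set.range φB) → ↥(Set.range φB) → Prop :=
      fun x y => φC (e x) = φC (e y) with hΘ'def
    have interp_key : ∀ (f : S.ops) (v : Fin (S.ar f) → ↥(Set.range φB)),
        φC (e ((subAlg B (Set.range φB) hA').interp f v)) =
          C.interp f (fun i => φC (e (v i))) := by
      intro f v
      have hval : Subtype.val
          (((subAlg B (Set.range φB) hA').interp f v : ↥(Set.range φB))) =
          φB (A.interp f (fun i => e (v i))) := by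
        show B.interp f (fun i => ((v i : B.carrier))) = _
        rw [hBhom f]
        exact congrArg _ (funext fun i => (he (v i)).symm)
      have hez : e ((subAlg B (Set.range φB) hA').interp f v) =
          A.interp f (fun i => e (v i)) :=
        hBinj ((he _).trans hval)
      rw [hez, hChom f]
    have hΘ' : IsCong (subAlg B (Set.range φB) hA') Θ' := by
      constructor
      · exact ⟨fun _ => rfl, fun h => h.symm, fun h1 h2 => h1.trans h2⟩
      · intro f v w hvw
        rw [hΘ'def]
        simp only
        rw [interp_key f v, interp_key f w]
        exact congrArg _ (funext fun i => hvw i)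
    obtain ⟨Φ, hΦcong, hres⟩ := hCEP B hKB (Set.range φB) hA' Θ' hΘ'
    -- the key characterization of Φ on the image
    have keyΦ : ∀ a a' : A.carrier, Φ (φB a) (φB a') ↔ φC a = φC a' := by
      intro a a'
      have := hres ⟨φB a, ⟨a, rfl⟩⟩ ⟨φB a', ⟨a', rfl⟩⟩
      rw [this, hΘ'def]
      simp only
      rw [ekey a ⟨a, rfl⟩, ekey a' ⟨a', rfl⟩]
    -- build D as the quotient of B by Φ
    refine ⟨quotAlg B Φ hΦcong,
      hK.1 B _ _ hKB (quot_mk_hom B Φ hΦcong) (quot_mk_surj B Φ hΦcong), ?_⟩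
    set g : C.carrier → A.carrier := Function.surjInv hCsurj with hgdef
    have hg : ∀ c, φC (g c) = c := fun c => Function.surjInv_eq hCsurj c
    refine ⟨Quotient.mk (congSetoid B Φ hΦcong),
      fun c => Quotient.mk (congSetoid B Φ hΦcong) (φB (g c)),
      quot_mk_hom B Φ hΦcong, ?_, ?_, ?_⟩
    · -- ψC is a homomorphism
      intro f v
      have h1 := (quot_mk_hom B Φ hΦcong f (fun i => φB (g (v i)))).symm
      show Quotient.mk (congSetoid B Φ hΦcong) (φB (g (C.interp f v))) =
        (quotAlg B Φ hΦcong).interp f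
        (fun i => Quotient.mk (congSetoid B Φ hΦcong) (φB (g (v i))))
      rw [h1]
      apply Quotient.sound
      show Φ _ _
      have h2 : B.interp f (fun i => φB (g (v i))) =
          φB (A.interp f (fun i => g (v i))) := (hBhom f _).symm
      rw [h2]
      rw [keyΦ]
      rw [hg, hChom f]
      exact congrArg _ (funext fun i => (hg (v i)).symm)
    · -- ψC is injective
      intro c c' hcc
      have := Quotient.exact hcc
      have hΦ : Φ (φB (g c)) (φB (g c')) := this
      have := (keyΦ _ _).mp hΦ
      rw [hg, hg] at this
      exact this
    · -- the square commutes
      intro a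
      apply Quotient.sound
      show Φ (φB a) (φB (g (φC a)))
      rw [keyΦ, hg]
  · -- spans → CEP
    intro hspan B hKB A hA Θ hΘ
    set Aalg := subAlg B A hA with hAalg
    have hvalhom : IsHom Aalg B Subtype.val := fun f v => rfl
    have hKA : K Aalg := hK.2.1 Aalg B Subtype.val hKB hvalhom Subtype.val_injective
    set C := quotAlg Aalg Θ hΘ with hC
    have hKC : K C := hK.1 Aalg C _ hKA (quot_mk_hom Aalg Θ hΘ) (quot_mk_surj Aalg Θ hΘ)
    obtain ⟨D, hKD, ψB, ψC, hψB, hψC, hinjC, hcomm⟩ :=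
      hspan Aalg B C hKA hKB hKC Subtype.val (Quotient.mk (congSetoid Aalg Θ hΘ))
        hvalhom Subtype.val_injective (quot_mk_hom Aalg Θ hΘ) (quot_mk_surj Aalg Θ hΘ)
    refine ⟨fun x y => ψB x = ψB y, ⟨⟨fun _ => rfl, fun h => h.symm,
      fun h1 h2 => h1.trans h2⟩, ?_⟩, ?_⟩
    · intro f v w hvw
      show ψB (B.interp f v) = ψB (B.interp f w)
      rw [hψB f v, hψB f w]
      exact congrArg _ (funext fun i => hvw i)
    · intro x y
      constructor
      · intro h
        have h1 : ψC (Quotient.mk (congSetoid Aalg Θ hΘ) x) =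
            ψC (Quotient.mk (congSetoid Aalg Θ hΘ) y) := by
          rw [← hcomm x, ← hcomm y]; exact h
        exact Quotient.exact (hinjC h1)
      · intro h
        show ψB (x : B.carrier) = ψB (y : B.carrier)
        rw [hcomm x, hcomm y]
        exact congrArg _ (Quotient.sound h)
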